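/- An allocation p ∈ Δ(X) is weakly Pareto efficient (i.e., there is no p' ∈ Δ(X) with U_j(p') > U_j(p) for all j = 1,…,N) if and only if there exists a nonzero vector λ ∈ ℝ^N with λ_j ≥ 0 for all j such that p maximizes Σ_{j=1}^N λ_j U_j(q) over all q ∈ Δ(X). -/

import Mathlib

open MeasureTheory
open scoped NNReal

/-- Let `X` be a nonempty compact metrizable space, `N ≥ 1`, and
`U_1, …, U_N : Δ(X) → ℝ` continuous concave utility functions on the space of Borel
probability measures with the topology of weak convergence.  An allocation `p ∈ Δ(X)`
is weakly Pareto efficient iff there is a nonzero nonnegative weight vector `w` such that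
`p` maximizes `∑ j, w j * U j q` over `q ∈ Δ(X)`. -/
-- mixture of probability measures
lemma mix_exists {X : Type*} [TopologicalSpace X] [MeasurableSpace X]
    (μ ν : ProbabilityMeasure X) (t : ℝ≥0) (ht : t ≤ 1) :
    ∃ σ : ProbabilityMeasure X,
      (σ : Measure X) = t • (μ : Measure X) + (1 - t) • (ν : Measure X) := by
  refine ⟨⟨t • (μ : Measure X) + (1 - t) • (ν : Measure X), ⟨?_⟩⟩, rfl⟩
  simp only [Measure.add_apply, Measure.smul_apply, measure_univ, smul_eq_mul, mul_one,
    ENNReal.smul_def]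
  rw [← ENNReal.coe_add, add_tsub_cancel_of_le ht, ENNReal.coe_one]

theorem stmt0 {X : Type*} [TopologicalSpace X] [TopologicalSpace.MetrizableSpace X]
    [CompactSpace X] [Nonempty X] [MeasurableSpace X] [BorelSpace X]
    (N : ℕ) (hN : 1 ≤ N)
    (U : Fin N → ProbabilityMeasure X → ℝ)
    (hUcont : ∀ j, Continuous (U j))
    (hUconc : ∀ (j : Fin N) (μ ν σ : ProbabilityMeasure X) (t : ℝ≥0), t ≤ 1 →
      (σ : Measure X) = t • (μ : Measure X) + (1 - t) • (ν : Measure X) →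
      (t : ℝ) * U j μ + (1 - (t : ℝ)) * U j ν ≤ U j σ)
    (p : ProbabilityMeasure X) :
    (¬ ∃ p' : ProbabilityMeasure X, ∀ j, U j p < U j p') ↔
      (∃ w : Fin N → ℝ, (∀ j, 0 ≤ w j) ∧ w ≠ 0 ∧
        ∀ q : ProbabilityMeasure X, ∑ j, w j * U j q ≤ ∑ j, w j * U j p) := by
  constructor
  · intro hpar
    -- the open positive orthant
    set s : Set (Fin N → ℝ) := Set.univ.pi (fun _ : Fin N => Set.Ioi (0 : ℝ)) with hs_def
    have hsopen : IsOpen s := isOpen_set_pi Set.finite_univ (fun _ _ => isOpen_Ioi)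
    have hsconv : Convex ℝ s := convex_pi (fun _ _ => convex_Ioi 0)
    -- feasible utility-gain set
    set A : Set (Fin N → ℝ) :=
      {v | ∃ q : ProbabilityMeasure X, ∀ j, v j ≤ U j q - U j p} with hA_def
    have hAconv : Convex ℝ A := by
      rintro v₁ ⟨q₁, h1⟩ v₂ ⟨q₂, h2⟩ a b ha hb hab
      have ha1 : a ≤ 1 := by linarith
      set t : ℝ≥0 := ⟨a, ha⟩ with ht_def
      have ht1 : t ≤ 1 := by exact_mod_cast ha1
      obtain ⟨σ, hσ⟩ := mix_exists q₁ q₂ t ht1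
      refine ⟨σ, fun j => ?_⟩
      have hc := hUconc j q₁ q₂ σ t ht1 hσ
      have hta : (t : ℝ) = a := rfl
      rw [hta] at hc
      have hb' : 1 - a = b := by linarith
      rw [hb'] at hc
      have h1j := h1 j
      have h2j := h2 j
      simp only [Pi.add_apply, Pi.smul_apply, smul_eq_mul]
      have e1 := mul_le_mul_of_nonneg_left h1j ha
      have e2 := mul_le_mul_of_nonneg_left h2j hb
      have e3 : a * U j p + b * U j p = U j p := by rw [← add_mul, hab, one_mul]
      nlinarith [e1, e2, e3, hc]
    have hdisj : Disjoint s A := by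
      rw [Set.disjoint_left]
      rintro v hvs ⟨q, hq⟩
      exact hpar ⟨q, fun j => by
        have h1 : 0 < v j := hvs j (Set.mem_univ j)
        have h2 := hq j
        linarith⟩
    obtain ⟨f, u, hfs, hfA⟩ := geometric_hahn_banach_open hsconv hsopen hAconv hdisj
    set c : ℝ := f (fun _ => (1 : ℝ)) with hc_def
    -- u ≤ 0 since 0 ∈ A
    have h0A : (0 : Fin N → ℝ) ∈ A := ⟨p, fun j => by simp⟩
    have hu0 : u ≤ 0 := by simpa using hfA 0 h0A
    -- 0 ≤ u by taking ε → 0 in the orthant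
    have hone : ∀ ε : ℝ, 0 < ε → ε * c < u := by
      intro ε hε
      have hmem : (fun _ : Fin N => ε) ∈ s := fun j _ => hε
      have := hfs _ hmem
      have heq : f (fun _ : Fin N => ε) = ε * c := by
        have : (fun _ : Fin N => ε) = ε • (fun _ : Fin N => (1 : ℝ)) := by
          funext k; simp
        rw [this, f.map_smul, smul_eq_mul, hc_def]
      linarith [heq ▸ this]
    have h0u : (0 : ℝ) ≤ u := by
      have htend : Filter.Tendsto (fun ε : ℝ => ε * c) (nhdsWithin 0 (Set.Ioi 0))
          (nhds (0 * c)) :=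
        (Filter.Tendsto.mul Filter.tendsto_id tendsto_const_nhds).mono_left
          nhdsWithin_le_nhds
      rw [zero_mul] at htend
      refine le_of_tendsto htend ?_
      filter_upwards [self_mem_nhdsWithin] with ε hε
      exact (hone ε hε).le
    have huz : u = 0 := le_antisymm hu0 h0u
    -- coefficients
    set lam : Fin N → ℝ := fun j => f (fun k => if j = k then (1 : ℝ) else 0) with hlam_def
    have hlam_nonpos : ∀ j, lam j ≤ 0 := by
      intro j
      have key : ∀ ε : ℝ, 0 < ε → lam j + ε * c < 0 := by
        intro ε hε
        have hmem : ((fun k => if j = k then (1 : ℝ) else 0) + fun _ => ε) ∈ s := by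
          intro k _
          by_cases h : j = k <;> simp [h, hε] <;> linarith
        have := hfs _ hmem
        rw [map_add] at this
        have heq : f (fun _ : Fin N => ε) = ε * c := by
          have : (fun _ : Fin N => ε) = ε • (fun _ : Fin N => (1 : ℝ)) := by
            funext k; simp
          rw [this, f.map_smul, smul_eq_mul, hc_def]
        rw [heq, huz] at this
        exact this
      have htend : Filter.Tendsto (fun ε : ℝ => lam j + ε * c) (nhdsWithin 0 (Set.Ioi 0))
          (nhds (lam j + 0 * c)) :=
        (Filter.Tendsto.add tendsto_const_nhds
          (Filter.Tendsto.mul Filter.tendsto_id tendsto_const_nhds)).mono_left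
          nhdsWithin_le_nhds
      rw [zero_mul, add_zero] at htend
      refine le_of_tendsto htend ?_
      filter_upwards [self_mem_nhdsWithin] with ε hε
      exact (key ε hε).le
    have hf_eq : ∀ v : Fin N → ℝ, f v = ∑ j, v j * lam j := by
      intro v
      have := (f : (Fin N → ℝ) →ₗ[ℝ] ℝ).pi_apply_eq_sum_univ v
      simpa [smul_eq_mul, hlam_def] using this
    refine ⟨fun j => -lam j, fun j => by simpa using neg_nonneg.mpr (hlam_nonpos j), ?_, ?_⟩
    · intro hw
      have hlam0 : ∀ j, lam j = 0 := by
        intro j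
        have := congrFun hw j
        simp at this
        linarith [this]
      have : f (fun _ : Fin N => (1 : ℝ)) = 0 := by
        rw [hf_eq]; simp [hlam0]
      have h1 := hone 1 one_pos
      rw [one_mul, hc_def, this] at h1
      linarith
    · intro q
      have hmem : (fun j => U j q - U j p) ∈ A := ⟨q, fun j => le_refl _⟩
      have := hfA _ hmem
      rw [hf_eq, huz] at this
      have hsum : ∑ j, ((-lam j) * U j p - (-lam j) * U j q)
          = ∑ j, (U j q - U j p) * lam j := by
        refine Finset.sum_congr rfl (fun j _ => by ring)
      have hsub : ∑ j, ((-lam j) * U j p - (-lam j) * U j q)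
          = (∑ j, (-lam j) * U j p) - ∑ j, (-lam j) * U j q :=
        Finset.sum_sub_distrib _ _
      linarith [hsub ▸ hsum]
  · rintro ⟨w, hw0, hwne, hmax⟩ ⟨p', hp'⟩
    have hex : ∃ j, 0 < w j := by
      by_contra h
      push_neg at h
      exact hwne (funext fun j => le_antisymm (h j) (hw0 j))
    obtain ⟨j₀, hj₀⟩ := hex
    have : ∑ j, w j * U j p < ∑ j, w j * U j p' := by
      refine Finset.sum_lt_sum (fun j _ => mul_le_mul_of_nonneg_left (hp' j).le (hw0 j))
        ⟨j₀, Finset.mem_univ _, ?_⟩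
      exact mul_lt_mul_of_pos_left (hp' j₀) hj₀
    linarith [hmax p']
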